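/- In any Nash equilibrium of a colorful bin packing game with uniform sizes, there is at most one open bin that is neither full (contains κ items) nor a singleton; moreover all singleton bins store items of a single common color, and if a non-full non-singleton bin exists alongside a singleton bin, its top item has that same color. -/

import Mathlib

open Finset

/-- In a uniform-size game, a bin (list of item indices, bottom to top) is
feasible if no two adjacent items share a color and it holds at most `κ` items. -/
def UBinOK {n : ℕ} {C : Type*} (color : Fin n → C) (κ : ℕ) (b : List (Fin n)) : Prop :=
  (b.map color).Chain' (· ≠ ·) ∧ b.length ≤ κ

/-- A strategy profile is a packing if every item occurs in exactly one bin, once. -/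
def IsPacking {n : ℕ} (σ : Fin n → List (Fin n)) : Prop :=
  ∀ i : Fin n, (∑ j : Fin n, ((σ j).count i)) = 1

/-- The number of open (nonempty) bins of a profile. -/
def openBins {n : ℕ} (σ : Fin n → List (Fin n)) : ℕ :=
  (Finset.univ.filter fun j => σ j ≠ []).card

/-- Nash equilibrium of a uniform-size colorful bin packing game (the
egalitarian and proportional cost functions coincide): the profile is a feasible
packing and no item in a bin with `k` items can move to the top of another bin
feasibly holding it with at least `k` items. -/
def UNE {n : ℕ} {C : Type*} (color : Fin n → C) (κ : ℕ)
    (σ : Fin n → List (Fin n)) : Prop :=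
  IsPacking σ ∧ (∀ j, UBinOK color κ (σ j)) ∧
    ∀ (i : Fin n) (j j' : Fin n), j ≠ j' → i ∈ σ j →
      UBinOK color κ (σ j' ++ [i]) → (σ j').length < (σ j).length

/-- Feasibility of appending an item on top of a feasible, non-full bin whose
top item (if any) has a different color. -/
lemma UBinOK_append {n : ℕ} {C : Type*} (color : Fin n → C) (κ : ℕ)
    {L : List (Fin n)} {i : Fin n} (hok : UBinOK color κ L) (hlen : L.length < κ)
    (htop : ∀ x ∈ L.getLast?, color x ≠ color i) :
    UBinOK color κ (L ++ [i]) := by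
  obtain ⟨hchain, -⟩ := hok
  constructor
  · rw [List.map_append]; unfold List.Chain'; rw [List.isChain_append]
    refine ⟨hchain, List.isChain_singleton _, ?_⟩
    intro x hx y hy
    simp only [List.map_cons, List.map_nil, List.head?_cons, Option.mem_def,
      Option.some.injEq] at hy
    subst hy
    rw [List.getLast?_map] at hx
    simp only [Option.mem_def, Option.map_eq_some_iff] at hx
    obtain ⟨a, ha, rfl⟩ := hx
    exact htop a ha
  · simpa using hlen

/-- In a bin with at least two items and no two adjacent colors equal, for any
color `c` there is an item of a different color. -/
lemma exists_mover {n : ℕ} {C : Type*} (color : Fin n → C)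
    {L : List (Fin n)} (h2 : 2 ≤ L.length)
    (hchain : (L.map color).Chain' (· ≠ ·)) (c : C) :
    ∃ i ∈ L, color i ≠ c := by
  have hne : L ≠ [] := by
    intro h; rw [h] at h2; simp at h2
  set t := L.getLast hne with ht
  by_cases hc : color t = c
  · have hdlen : L.dropLast.length = L.length - 1 := List.length_dropLast
    have hdne : L.dropLast ≠ [] := by
      intro h; rw [h] at hdlen; simp at hdlen; omega
    set s := L.dropLast.getLast hdne with hs
    refine ⟨s, (List.dropLast_sublist L).subset (List.getLast_mem hdne), ?_⟩
    have hsplit : L.dropLast ++ [t] = L := List.dropLast_append_getLast hne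
    have hch : ((L.dropLast ++ [t]).map color).Chain' (· ≠ ·) := by
      rw [hsplit]; exact hchain
    rw [List.map_append] at hch; unfold List.Chain' at hch; rw [List.isChain_append] at hch
    have hrel := hch.2.2 (color s) ?_ (color t) (by simp)
    · rw [← hc]; exact hrel
    · rw [List.getLast?_map, List.getLast?_eq_getLast hdne]; simp [hs]
  · exact ⟨t, List.getLast_mem hne, hc⟩

/-- Structure of Nash equilibria in uniform-size colorful bin packing games:
there is at most one open bin that is neither full (`κ` items) nor a singleton;
all singleton bins store items of a single common color; and if a non-full
non-singleton bin exists alongside a singleton bin, its top item has that same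
color. -/
theorem NE_structure_uniform {n κ : ℕ} {C : Type*} (color : Fin n → C)
    (hκ : 2 ≤ κ) (σ : Fin n → List (Fin n)) (hNE : UNE color κ σ) :
    (∀ l l' : Fin n,
        (2 ≤ (σ l).length ∧ (σ l).length < κ) →
        (2 ≤ (σ l').length ∧ (σ l').length < κ) → l = l') ∧
    (∀ (l l' : Fin n) (i i' : Fin n), σ l = [i] → σ l' = [i'] →
        color i = color i') ∧
    (∀ (l l' : Fin n) (i' : Fin n),
        (2 ≤ (σ l).length ∧ (σ l).length < κ) → σ l' = [i'] →
        ((σ l).getLast?).map color = some (color i')) := by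
  obtain ⟨hpack, hok, hmove⟩ := hNE
  have key : ∀ l l' : Fin n, l ≠ l' →
      2 ≤ (σ l).length → (σ l').length < κ → (σ l').length < (σ l).length := by
    intro l l' hll h2 hlt
    obtain ⟨i, hi, hci⟩ : ∃ i ∈ σ l, ∀ x ∈ (σ l').getLast?, color x ≠ color i := by
      have hne : σ l ≠ [] := by intro h; rw [h] at h2; simp at h2
      by_cases hempty : σ l' = []
      · exact ⟨(σ l).getLast hne, List.getLast_mem hne, by rw [hempty]; simp⟩
      · obtain ⟨i, hi, hci⟩ := exists_mover color h2 (hok l).1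
          (color ((σ l').getLast hempty))
        refine ⟨i, hi, ?_⟩
        rw [List.getLast?_eq_getLast hempty]
        rintro x hx
        simp only [Option.mem_def, Option.some.injEq] at hx
        subst hx
        exact fun h => hci h.symm
    exact hmove i l l' hll hi (UBinOK_append color κ (hok l') hlt hci)
  refine ⟨?_, ?_, ?_⟩
  · intro l l' ⟨h2, hlt⟩ ⟨h2', hlt'⟩
    by_contra hll
    have ha := key l l' hll h2 hlt'
    have hb := key l' l (Ne.symm hll) h2' hlt
    omega
  · intro l l' i i' hl hl'
    by_cases hll : l = l'
    · subst hll; rw [hl] at hl'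
      simp only [List.cons.injEq] at hl'
      rw [hl'.1]
    · by_contra hc
      have hfeas : UBinOK color κ (σ l' ++ [i]) := by
        refine UBinOK_append color κ (hok l') (by rw [hl']; simp only [List.length_singleton]; omega) ?_
        intro x hx
        rw [hl'] at hx
        simp only [List.getLast?_singleton, Option.mem_def, Option.some.injEq] at hx
        subst hx
        exact fun h => hc h.symm
      have := hmove i l l' hll (by rw [hl]; simp) hfeas
      rw [hl, hl'] at this
      simp at this
  · intro l l' i' ⟨h2, hlt⟩ hl'
    have hne : σ l ≠ [] := by intro h; rw [h] at h2; simp at h2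
    rw [List.getLast?_eq_getLast hne]
    simp only [Option.map_some]
    by_contra hc
    have hll : l' ≠ l := by
      intro h; rw [← h, hl'] at h2; simp at h2
    have hfeas : UBinOK color κ (σ l ++ [i']) := by
      refine UBinOK_append color κ (hok l) hlt ?_
      intro x hx
      rw [List.getLast?_eq_getLast hne] at hx
      simp only [Option.mem_def, Option.some.injEq] at hx
      subst hx
      exact fun h => hc (by rw [h])
    have := hmove i' l' l hll (by rw [hl']; simp) hfeas
    rw [hl'] at this
    simp only [List.length_singleton] at this
    omega
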